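/- Let (G,Λ) be a Γ-labeled graph whose underlying undirected graph has treewidth at most w, and let k ≥ 1. Then either G contains k vertex-disjoint non-null cycles, or there is a set X ⊆ V(G) with |X| ≤ (k−1)(w+1) such that G − X has no non-null cycles. -/

import Mathlib

/-- The label (ordered product of arc labels) of a walk in a `Γ`-labeled graph,
where the labeling is given as a skew-symmetric function `Λ : V → V → Γ`. -/
def walkLabel {V : Type} {Γ : Type} [Group Γ] (G : SimpleGraph V) (Λ : V → V → Γ) :
    {u v : V} → G.Walk u v → Γ
  | _, _, SimpleGraph.Walk.nil => 1
  | _, _, SimpleGraph.Walk.cons (u := a) (v := b) _ p => Λ a b * walkLabel G Λ p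
/-- `G` has a tree decomposition of width at most `w`. -/
def HasTreewidthLE {V : Type} (G : SimpleGraph V) (w : ℕ) : Prop :=
  ∃ (ι : Type) (T : SimpleGraph ι) (bag : ι → Set V),
    T.Connected ∧ T.IsAcyclic ∧
    (∀ v : V, ∃ b : ι, v ∈ bag b) ∧
    (∀ u v : V, G.Adj u v → ∃ b : ι, u ∈ bag b ∧ v ∈ bag b) ∧
    (∀ v : V, (T.induce {b : ι | v ∈ bag b}).Connected) ∧
    (∀ b : ι, (bag b).Finite ∧ (bag b).ncard ≤ w + 1)

namespace Stmt9Aux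

open SimpleGraph


open SimpleGraph

section TreeLayer

variable {ι : Type} {T : SimpleGraph ι}

noncomputable def pth (hT : T.IsTree) (r b : ι) : T.Walk r b :=
  ((hT.existsUnique_path r b).exists).choose

lemma pth_isPath (hT : T.IsTree) (r b : ι) : (pth hT r b).IsPath :=
  ((hT.existsUnique_path r b).exists).choose_spec

lemma pth_unique (hT : T.IsTree) {r b : ι} (q : T.Walk r b) (hq : q.IsPath) :
    q = pth hT r b :=
  (hT.existsUnique_path r b).unique hq (pth_isPath hT r b)

/-- `Anc hT r s t` : `t` is on the path from the root `r` to `s` (i.e. `t` is an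
ancestor of `s`). -/
def Anc (hT : T.IsTree) (r s t : ι) : Prop := t ∈ (pth hT r s).support

lemma anc_refl (hT : T.IsTree) (r s : ι) : Anc hT r s s := Walk.end_mem_support _

lemma anc_root (hT : T.IsTree) (r s : ι) : Anc hT r s r := Walk.start_mem_support _

lemma pth_takeUntil [DecidableEq ι] (hT : T.IsTree) (r : ι) {s t : ι}
    (h : t ∈ (pth hT r s).support) : pth hT r t = (pth hT r s).takeUntil t h :=
  (pth_unique hT _ ((pth_isPath hT r s).takeUntil h)).symm

lemma anc_trans (hT : T.IsTree) (r : ι) {s t u : ι}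
    (h1 : Anc hT r s t) (h2 : Anc hT r t u) : Anc hT r s u := by
  classical
  unfold Anc at *
  rw [pth_takeUntil hT r h1] at h2
  exact Walk.support_takeUntil_subset _ _ h2

lemma anc_length_le (hT : T.IsTree) (r : ι) {s t : ι} (h : Anc hT r s t) :
    (pth hT r t).length ≤ (pth hT r s).length := by
  classical
  rw [pth_takeUntil hT r h]
  exact Walk.length_takeUntil_le _ _

lemma anc_length_lt (hT : T.IsTree) (r : ι) {s t : ι} (h : Anc hT r s t) (hne : t ≠ s) :
    (pth hT r t).length < (pth hT r s).length := by
  classical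
  have hsp := congrArg Walk.length ((pth hT r s).take_spec h)
  rw [Walk.length_append] at hsp
  have hd : 0 < ((pth hT r s).dropUntil t h).length := by
    rcases Nat.eq_zero_or_pos ((pth hT r s).dropUntil t h).length with h0 | h0
    · exact absurd (Walk.eq_of_length_eq_zero h0) hne
    · exact h0
  rw [pth_takeUntil hT r h]
  omega

lemma anc_antisymm (hT : T.IsTree) (r : ι) {s t : ι}
    (h1 : Anc hT r s t) (h2 : Anc hT r t s) : s = t := by
  by_contra hne
  have l1 := anc_length_lt hT r h1 (fun e => hne e.symm)
  have l2 := anc_length_lt hT r h2 hne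
  omega

lemma edge_dichotomy (hT : T.IsTree) (r : ι) {a b : ι} (hadj : T.Adj a b) :
    (∀ x, x ∈ (pth hT r b).support ↔ x ∈ (pth hT r a).support ∨ x = b) ∨
    (∀ x, x ∈ (pth hT r a).support ↔ x ∈ (pth hT r b).support ∨ x = a) := by
  classical
  by_cases hb : b ∈ (pth hT r a).support
  · right
    have hba : pth hT r b = (pth hT r a).takeUntil b hb := pth_takeUntil hT r hb
    have hna : a ∉ (pth hT r b).support := by
      rw [hba]
      intro ha
      have hnodup : ((pth hT r a).support).Nodup := (pth_isPath hT r a).support_nodup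
      rw [← (pth hT r a).take_spec hb, Walk.support_append] at hnodup
      have hdisj := List.disjoint_of_nodup_append hnodup
      have haend : a ∈ ((pth hT r a).dropUntil b hb).support := Walk.end_mem_support _
      have htail : a ∈ ((pth hT r a).dropUntil b hb).support.tail := by
        have hcons := Walk.support_eq_cons ((pth hT r a).dropUntil b hb)
        rw [hcons] at haend
        rcases List.mem_cons.mp haend with h | h
        · exact absurd h hadj.ne
        · rw [hcons]; exact h
      exact hdisj ha htail
    have hq : ((pth hT r b).concat hadj.symm).IsPath := by
      rw [Walk.isPath_def, Walk.support_concat]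
      exact List.Nodup.append (pth_isPath hT r b).support_nodup (List.nodup_singleton a)
        (fun x hx hx' => by rw [List.mem_singleton] at hx'; subst hx'; exact hna hx)
    have heq := pth_unique hT _ hq
    intro x
    rw [← heq, Walk.support_concat, List.mem_append,
      List.mem_singleton]
  · left
    have hq : ((pth hT r a).concat hadj).IsPath := by
      rw [Walk.isPath_def, Walk.support_concat]
      exact List.Nodup.append (pth_isPath hT r a).support_nodup (List.nodup_singleton b)
        (fun x hx hx' => by rw [List.mem_singleton] at hx'; subst hx'; exact hb hx)
    have heq := pth_unique hT _ hq
    intro x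
    rw [← heq, Walk.support_concat, List.mem_append,
      List.mem_singleton]

lemma walk_avoid (hT : T.IsTree) (r : ι) {a b : ι} (W : T.Walk a b) (s : ι)
    (hs : s ∉ W.support) : Anc hT r a s ↔ Anc hT r b s := by
  induction W with
  | nil => exact Iff.rfl
  | @cons u v w h q ih =>
    rw [Walk.support_cons, List.mem_cons] at hs
    push_neg at hs
    obtain ⟨hsu, hsq⟩ := hs
    have hsv : s ≠ v := fun e => hsq (e ▸ q.start_mem_support)
    have step : Anc hT r u s ↔ Anc hT r v s := by
      rcases edge_dichotomy hT r h with hc | hc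
      · unfold Anc
        rw [hc s]
        simp [hsv]
      · unfold Anc
        rw [hc s]
        simp [hsu]
    exact step.trans (ih hsq)

lemma walk_grow (hT : T.IsTree) (r : ι) (TD : Set ι) (m : ι)
    (hmin : ∀ x ∈ TD, (pth hT r m).length ≤ (pth hT r x).length)
    {a b : ι} (W : T.Walk a b) (hsupp : ∀ x ∈ W.support, x ∈ TD)
    (ha : Anc hT r a m) : Anc hT r b m := by
  induction W with
  | nil => exact ha
  | @cons u v w h q ih =>
    have hvTD : v ∈ TD := hsupp v (by rw [Walk.support_cons]; exact List.mem_cons_of_mem _ q.start_mem_support)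
    have hnext : Anc hT r v m := by
      rcases edge_dichotomy hT r h with hc | hc
      · exact (hc m).mpr (Or.inl ha)
      · rcases (hc m).mp ha with h1 | h1
        · exact h1
        · exfalso
          have hvu : Anc hT r u v := (hc v).mpr (Or.inl (anc_refl hT r v))
          have hlt := anc_length_lt hT r hvu h.ne'
          have hle := hmin v hvTD
          rw [h1] at hle
          omega
    exact ih (fun x hx => hsupp x (by rw [Walk.support_cons]; exact List.mem_cons_of_mem _ hx)) hnext

end TreeLayer

section BagLayer

variable {V : Type} {G : SimpleGraph V} {ι : Type} {T : SimpleGraph ι}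
variable {bag : ι → Set V}

/-- The set of vertices appearing in bags of the subtree below (and incl.) `t`. -/
def Rt (hT : T.IsTree) (r : ι) (bag : ι → Set V) (t : ι) : Set V :=
  {v | ∃ b, Anc hT r b t ∧ v ∈ bag b}

lemma bag_walk (hbc : ∀ v : V, (T.induce {b : ι | v ∈ bag b}).Connected)
    {v : V} {b b' : ι} (hb : v ∈ bag b) (hb' : v ∈ bag b') :
    ∃ W : T.Walk b b', ∀ x ∈ W.support, v ∈ bag x := by
  obtain ⟨W0⟩ := ((hbc v).preconnected ⟨b, hb⟩ ⟨b', hb'⟩)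
  let f : T.induce {b : ι | v ∈ bag b} →g T := ⟨Subtype.val, fun {x y} h => h⟩
  refine ⟨W0.map f, ?_⟩
  intro x hx
  rw [Walk.support_map, List.mem_map] at hx
  obtain ⟨y, _, rfl⟩ := hx
  exact y.property

lemma bag_cross (hT : T.IsTree) (r : ι)
    (hbc : ∀ v : V, (T.induce {b : ι | v ∈ bag b}).Connected)
    {v : V} {b b'' t : ι} (hb : v ∈ bag b) (hb'' : v ∈ bag b'')
    (hAnc : Anc hT r b'' t) (hnot : ¬ Anc hT r b t) : v ∈ bag t := by
  obtain ⟨W, hW⟩ := bag_walk hbc hb'' hb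
  by_contra hv
  have ht : t ∉ W.support := fun h => hv (hW t h)
  exact hnot ((walk_avoid hT r W t ht).mp hAnc)

lemma anc_mono_Rt (hT : T.IsTree) (r : ι) {t t' : ι} (h : Anc hT r t' t) :
    Rt hT r bag t' ⊆ Rt hT r bag t := by
  rintro v ⟨b, hb, hvb⟩
  exact ⟨b, anc_trans hT r hb h, hvb⟩

lemma sep_edge (hT : T.IsTree) (r : ι)
    (hbc : ∀ v : V, (T.induce {b : ι | v ∈ bag b}).Connected)
    (hedge : ∀ u v : V, G.Adj u v → ∃ b : ι, u ∈ bag b ∧ v ∈ bag b)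
    {u v : V} {t : ι} (hadj : G.Adj u v) (hu : u ∈ Rt hT r bag t)
    (hub : u ∉ bag t) : v ∈ Rt hT r bag t := by
  obtain ⟨b0, hu0, hv0⟩ := hedge u v hadj
  obtain ⟨b1, hb1anc, hub1⟩ := hu
  by_cases h : Anc hT r b0 t
  · exact ⟨b0, h, hv0⟩
  · exact absurd (bag_cross hT r hbc hu0 hub1 hb1anc h) hub

lemma sep_walk (hT : T.IsTree) (r : ι)
    (hbc : ∀ v : V, (T.induce {b : ι | v ∈ bag b}).Connected)
    (hedge : ∀ u v : V, G.Adj u v → ∃ b : ι, u ∈ bag b ∧ v ∈ bag b)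
    {u u' : V} {t : ι} (p : G.Walk u u') (hp : ∀ x ∈ p.support, x ∉ bag t)
    (hu : u ∈ Rt hT r bag t) : u' ∈ Rt hT r bag t := by
  revert hp hu
  induction p with
  | nil => exact fun _ hu => hu
  | @cons a c d hadj q ih =>
    intro hp hu
    have hc : c ∈ Rt hT r bag t :=
      sep_edge hT r hbc hedge hadj hu (hp a (Walk.start_mem_support _))
    exact ih (fun x hx => hp x (by rw [Walk.support_cons]; exact List.mem_cons_of_mem _ hx)) hc

lemma walk_conn (hbc : ∀ v : V, (T.induce {b : ι | v ∈ bag b}).Connected)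
    (hedge : ∀ u v : V, G.Adj u v → ∃ b : ι, u ∈ bag b ∧ v ∈ bag b)
    {u u' : V} (p : G.Walk u u') (b b' : ι) (hb : u ∈ bag b) (hb' : u' ∈ bag b') :
    ∃ W : T.Walk b b', ∀ x ∈ W.support, ∃ z ∈ p.support, z ∈ bag x := by
  revert hb
  induction p generalizing b with
  | nil =>
    intro hb
    obtain ⟨W, hW⟩ := bag_walk hbc hb hb'
    exact ⟨W, fun x hx => ⟨_, Walk.start_mem_support _, hW x hx⟩⟩
  | @cons a c d hadj q ih =>
    intro hb
    obtain ⟨b0, hub0, hwb0⟩ := hedge _ _ hadj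
    obtain ⟨W1, hW1⟩ := bag_walk hbc hb hub0
    obtain ⟨W2, hW2⟩ := ih b0 hb' hwb0
    refine ⟨W1.append W2, ?_⟩
    intro x hx
    rcases (Walk.mem_support_append_iff _ _).mp hx with h | h
    · exact ⟨a, Walk.start_mem_support _, hW1 x h⟩
    · obtain ⟨z, hz, hzb⟩ := hW2 x h
      exact ⟨z, by rw [Walk.support_cons]; exact List.mem_cons_of_mem _ hz, hzb⟩

lemma closed_subwalk {u v v' : V} (c : G.Walk u u) (hv : v ∈ c.support)
    (hv' : v' ∈ c.support) :
    ∃ p : G.Walk v v', ∀ x ∈ p.support, x ∈ c.support := by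
  classical
  refine ⟨(c.dropUntil v hv).append (c.takeUntil v' hv'), ?_⟩
  intro x hx
  rcases (Walk.mem_support_append_iff _ _).mp hx with h | h
  · exact Walk.support_dropUntil_subset _ _ h
  · exact Walk.support_takeUntil_subset _ _ h

lemma top_node (hT : T.IsTree) (r : ι)
    (hbc : ∀ v : V, (T.induce {b : ι | v ∈ bag b}).Connected)
    (hedge : ∀ u v : V, G.Adj u v → ∃ b : ι, u ∈ bag b ∧ v ∈ bag b)
    (hcov : ∀ v : V, ∃ b : ι, v ∈ bag b)
    {u : V} (c : G.Walk u u) :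
    ∃ m : ι, (∀ x ∈ c.support, x ∈ Rt hT r bag m) ∧
      ∀ t : ι, (∀ x ∈ c.support, x ∈ Rt hT r bag t) →
        (∀ x ∈ c.support, x ∉ bag t) → (Anc hT r m t ∧ m ≠ t) := by
  classical
  set TD : Set ι := {x : ι | ∃ z ∈ c.support, z ∈ bag x} with hTD
  have hTDne : ∃ x, x ∈ TD := by
    obtain ⟨b0, hb0⟩ := hcov u
    exact ⟨b0, ⟨u, c.start_mem_support, hb0⟩⟩
  have hPex : ∃ n, ∃ x ∈ TD, (pth hT r x).length = n := by
    obtain ⟨x, hx⟩ := hTDne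
    exact ⟨(pth hT r x).length, x, hx, rfl⟩
  obtain ⟨m, hmTD, hmlen⟩ := Nat.find_spec hPex
  have hmin : ∀ x ∈ TD, (pth hT r m).length ≤ (pth hT r x).length := by
    intro x hx
    rw [hmlen]
    exact Nat.find_min' hPex ⟨x, hx, rfl⟩
  have claim1 : ∀ x ∈ TD, Anc hT r x m := by
    intro x hx
    obtain ⟨z, hz, hzb⟩ := hx
    obtain ⟨z0, hz0, hz0b⟩ := hmTD
    obtain ⟨p, hps⟩ := closed_subwalk c hz0 hz
    obtain ⟨W, hW⟩ := walk_conn hbc hedge p m x hz0b hzb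
    refine walk_grow hT r TD m hmin W ?_ (anc_refl hT r m)
    intro y hy
    obtain ⟨zz, hzz, hzzb⟩ := hW y hy
    exact ⟨zz, hps zz hzz, hzzb⟩
  refine ⟨m, ?_, ?_⟩
  · intro z hz
    obtain ⟨b, hb⟩ := hcov z
    exact ⟨b, claim1 b ⟨z, hz, hb⟩, hb⟩
  · intro t hRt hbag
    have hTDsub : ∀ x ∈ TD, Anc hT r x t := by
      rintro x ⟨z, hz, hzb⟩
      obtain ⟨b'', hanc'', hzb''⟩ := hRt z hz
      by_contra hnot
      exact hbag z hz (bag_cross hT r hbc hzb hzb'' hanc'' hnot)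
    refine ⟨hTDsub m hmTD, ?_⟩
    rintro rfl
    obtain ⟨z, hz, hzb⟩ := hmTD
    exact hbag z hz hzb

lemma chain_min (hT : T.IsTree) (r : ι) {s : Set ι}
    (hchain : ∀ a ∈ s, ∀ b ∈ s, Anc hT r a b ∨ Anc hT r b a)
    (hfin : s.Finite) (hne : s.Nonempty) :
    ∃ m ∈ s, ∀ x ∈ s, Anc hT r m x := by
  obtain ⟨m, hm, hmax⟩ := Set.exists_max_image s (fun x => (pth hT r x).length) hfin hne
  refine ⟨m, hm, ?_⟩
  intro x hx
  rcases hchain m hm x hx with h | h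
  · exact h
  · by_cases he : m = x
    · subst he; exact anc_refl hT r m
    · have := anc_length_lt hT r h he
      have := hmax x hx
      omega

end BagLayer
section MainLayer

variable {V Γ : Type} [Group Γ]

/-- A non-null cycle avoiding the forbidden set `F`. -/
def NNCyc (G : SimpleGraph V) (Λ : V → V → Γ) (F : Set V) (u : V) (c : G.Walk u u) : Prop :=
  c.IsCycle ∧ walkLabel G Λ c ≠ 1 ∧ ∀ x ∈ c.support, x ∉ F

variable {G : SimpleGraph V} {Λ : V → V → Γ} {ι : Type} {T : SimpleGraph ι}
variable {bag : ι → Set V} {w : ℕ}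

theorem key_lemma (hT : T.IsTree) (rt : ι)
    (hcov : ∀ v : V, ∃ b : ι, v ∈ bag b)
    (hedge : ∀ u v : V, G.Adj u v → ∃ b : ι, u ∈ bag b ∧ v ∈ bag b)
    (hbc : ∀ v : V, (T.induce {b : ι | v ∈ bag b}).Connected)
    (hsize : ∀ b : ι, (bag b).Finite ∧ (bag b).ncard ≤ w + 1)
    (F : Set V) (k : ℕ)
    (hex : ∃ u : V, ∃ c : G.Walk u u, NNCyc G Λ F u c) :
    (∃ (x : Fin k → V) (c : ∀ i : Fin k, G.Walk (x i) (x i)),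
      (∀ i, NNCyc G Λ F (x i) (c i)) ∧
      (∀ i j : Fin k, i ≠ j → ∀ v ∈ (c i).support, v ∉ (c j).support)) ∨
    (∃ (us : V) (cs : G.Walk us us), NNCyc G Λ F us cs ∧
      ∃ B : Set V, B.Finite ∧ B.ncard ≤ w + 1 ∧
        ∀ (u : V) (c : G.Walk u u), NNCyc G Λ F u c → (∀ x ∈ c.support, x ∉ B) →
          ∀ x ∈ c.support, x ∉ cs.support) := by
  classical
  set SF : Set ι := {t | ∃ u : V, ∃ c : G.Walk u u,
    NNCyc G Λ F u c ∧ ∀ x ∈ c.support, x ∈ Rt hT rt bag t} with hSF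
  have hrS : rt ∈ SF := by
    obtain ⟨u, c, hc⟩ := hex
    refine ⟨u, c, hc, ?_⟩
    intro x _
    obtain ⟨b, hb⟩ := hcov x
    exact ⟨b, anc_root hT rt b, hb⟩
  -- maximal chain
  set Rr : ι → ι → Prop := fun a b =>
    (a ∈ SF ∧ b ∈ SF) ∧ (Anc hT rt a b ∨ Anc hT rt b a) with hRr
  have hsingle : IsChain Rr {rt} := IsChain.singleton
  obtain ⟨M, hM, hrM'⟩ := hsingle.exists_maxChain
  have hrM : rt ∈ M := hrM' rfl
  have hMSF : ∀ x ∈ M, x ∈ SF := by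
    intro x hx
    by_cases he : x = rt
    · exact he ▸ hrS
    · rcases hM.1 hx hrM he with h | h
      · exact h.1.1
      · exact h.1.2
  have hMtotal : ∀ a ∈ M, ∀ b ∈ M, Anc hT rt a b ∨ Anc hT rt b a := by
    intro a ha b hb
    by_cases he : a = b
    · exact Or.inl (he ▸ anc_refl hT rt a)
    · rcases hM.1 ha hb he with h | h
      · exact h.2
      · exact h.2.symm
  have hMins : ∀ s ∈ SF, (∀ a ∈ M, Anc hT rt s a ∨ Anc hT rt a s) → s ∈ M := by
    intro s hs hcomp
    have hchain : IsChain Rr (insert s M) := by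
      refine hM.1.insert ?_
      intro b hb _
      exact Or.inl ⟨⟨hs, hMSF b hb⟩, hcomp b hb⟩
    have heq := hM.2 hchain (Set.subset_insert _ _)
    rw [heq]
    exact Set.mem_insert _ _
  -- propagation: a cycle avoiding bag t with one support vertex in Rt t has
  -- all its support in Rt t
  have hprop : ∀ (u : V) (c : G.Walk u u) (t : ι), (∀ x ∈ c.support, x ∉ bag t) →
      (∃ x ∈ c.support, x ∈ Rt hT rt bag t) → ∀ y ∈ c.support, y ∈ Rt hT rt bag t := by
    intro u c t havoid ⟨x, hx, hxR⟩ y hy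
    obtain ⟨p, hps⟩ := closed_subwalk c hx hy
    exact sep_walk hT rt hbc hedge p (fun z hz => havoid z (hps z hz)) hxR
  by_cases hminex : ∃ m ∈ M, ∀ t ∈ M, Anc hT rt m t
  -- CASE A : the chain has a minimum
  · obtain ⟨m, hmM, hmmin⟩ := hminex
    have hnobelow : ∀ s ∈ SF, Anc hT rt s m → s = m := by
      intro s hs hanc
      have hsM : s ∈ M := hMins s hs
        (fun a ha => Or.inl (anc_trans hT rt hanc (hmmin a ha)))
      exact anc_antisymm hT rt hanc (hmmin s hsM)
    obtain ⟨us, cs, hNNs, hsupps⟩ := hMSF m hmM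
    right
    refine ⟨us, cs, hNNs, bag m, (hsize m).1, (hsize m).2, ?_⟩
    intro u c hNN hB x hx hxs
    have hall : ∀ y ∈ c.support, y ∈ Rt hT rt bag m :=
      hprop u c m hB ⟨x, hx, hsupps x hxs⟩
    obtain ⟨mm, hmm1, hmm2⟩ := top_node hT rt hbc hedge hcov c
    obtain ⟨hanc, hne⟩ := hmm2 m hall hB
    exact hne (hnobelow mm ⟨u, c, hNN, hmm1⟩ hanc)
  -- CASE B : no minimum
  · push_neg at hminex
    have hdesc : ∀ m ∈ M, ∃ t ∈ M, Anc hT rt t m ∧ t ≠ m := by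
      intro m hm
      obtain ⟨t, htM, hnot⟩ := hminex m hm
      rcases hMtotal m hm t htM with h | h
      · exact absurd h hnot
      · refine ⟨t, htM, h, ?_⟩
        intro e
        exact hnot (e ▸ anc_refl hT rt m)
    set K : Set V := {v | ∃ t ∈ M, ∀ s ∈ M, Anc hT rt s t → v ∈ bag s} with hK
    -- finite subsets of K have common thresholds
    have hKsub : ∀ Fs : Set V, Fs.Finite → Fs ⊆ K →
        ∃ t ∈ M, ∀ s ∈ M, Anc hT rt s t → Fs ⊆ bag s := by
      intro Fs hFsfin
      refine Set.Finite.induction_on Fs hFsfin ?_ ?_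
      · exact fun _ => ⟨rt, hrM, fun s _ _ => Set.empty_subset _⟩
      · intro a s _ _ IH hins
        obtain ⟨t1, ht1M, ht1⟩ := IH (fun x hx => hins (Set.mem_insert_of_mem _ hx))
        obtain ⟨t2, ht2M, ht2⟩ := hins (Set.mem_insert _ _)
        have hmin2 : ∃ tm ∈ M, Anc hT rt tm t1 ∧ Anc hT rt tm t2 := by
          rcases hMtotal t1 ht1M t2 ht2M with h | h
          · exact ⟨t1, ht1M, anc_refl hT rt t1, h⟩
          · exact ⟨t2, ht2M, h, anc_refl hT rt t2⟩
        obtain ⟨tm, htmM, htm1, htm2⟩ := hmin2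
        refine ⟨tm, htmM, ?_⟩
        intro s hsM hstm
        refine Set.insert_subset (ht2 s hsM (anc_trans hT rt hstm htm2)) ?_
        exact ht1 s hsM (anc_trans hT rt hstm htm1)
    have hKfin : K.Finite := by
      by_contra hinf
      have hinf2 : K.Infinite := hinf
      obtain ⟨Fs, hFsK, hFsfin, hFscard⟩ := hinf2.exists_subset_ncard_eq (w + 2)
      obtain ⟨t, htM, ht⟩ := hKsub Fs hFsfin hFsK
      have hsub := ht t htM (anc_refl hT rt t)
      have := Set.ncard_le_ncard hsub (hsize t).1
      rw [hFscard] at this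
      have := (hsize t).2
      omega
    obtain ⟨tK, htKM, htK⟩ := hKsub K hKfin (fun x hx => hx)
    -- the B-claim
    have bclaim : ∀ (u : V) (c : G.Walk u u), NNCyc G Λ F u c →
        (∀ x ∈ c.support, x ∉ K) → ∀ t ∈ M,
        ∃ s ∈ M, Anc hT rt s t ∧ ∀ x ∈ c.support, x ∉ Rt hT rt bag s := by
      intro u c hNN hKavoid t htM
      by_contra hcon
      push_neg at hcon
      -- hcon : ∀ s ∈ M, Anc s t → ∃ x ∈ c.support, x ∈ Rt s
      -- Step 1: find m0 below which bags avoid the support of c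
      have hcv : ∀ v : {v : V // v ∈ c.support},
          ∃ cv, cv ∈ M ∧ ∀ s ∈ M, Anc hT rt s cv → (v : V) ∉ bag s := by
        rintro ⟨v, hv⟩
        by_cases hI : ∃ a ∈ M, v ∈ bag a
        · obtain ⟨a, haM, hva⟩ := hI
          have hvK : ¬ ∀ s ∈ M, Anc hT rt s a → v ∈ bag s :=
            fun h => hKavoid v hv ⟨a, haM, h⟩
          push_neg at hvK
          obtain ⟨s0, hs0M, hs0anc, hs0v⟩ := hvK
          refine ⟨s0, hs0M, ?_⟩
          intro s hsM hss0 hvbag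
          obtain ⟨W, hW⟩ := bag_walk hbc hvbag hva
          have hs0W : s0 ∈ W.support := by
            by_contra hnW
            have hiff := walk_avoid hT rt W s0 hnW
            have hanc2 : Anc hT rt a s0 := hiff.mp hss0
            have he := anc_antisymm hT rt hanc2 hs0anc
            exact hs0v (he ▸ hva)
          exact hs0v (hW s0 hs0W)
        · push_neg at hI
          exact ⟨t, htM, fun s hsM _ => hI s hsM⟩
      choose cv hcvM hcvP using hcv
      have hsuppfin : {v : V | v ∈ c.support}.Finite := c.support.finite_toSet
      haveI : Finite {v : V // v ∈ c.support} := hsuppfin.to_subtype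
      set A : Set ι := insert t (Set.range cv) with hA
      have hAfin : A.Finite := (Set.finite_range cv).insert t
      have hAM : ∀ x ∈ A, x ∈ M := by
        intro x hx
        rcases hx with rfl | ⟨v, rfl⟩
        · exact htM
        · exact hcvM v
      obtain ⟨m0, hm0A, hm0min⟩ := chain_min hT rt
        (fun a ha b hb => hMtotal a (hAM a ha) b (hAM b hb)) hAfin
        ⟨t, Set.mem_insert _ _⟩
      have hm0M : m0 ∈ M := hAM m0 hm0A
      have hm0t : Anc hT rt m0 t := hm0min t (Set.mem_insert _ _)
      have hstep1 : ∀ s ∈ M, Anc hT rt s m0 → ∀ v ∈ c.support, v ∉ bag s := by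
        intro s hsM hsm0 v hv
        exact hcvP ⟨v, hv⟩ s hsM
          (anc_trans hT rt hsm0 (hm0min _ (Set.mem_insert_of_mem _ ⟨⟨v, hv⟩, rfl⟩)))
      -- Step 2: top node argument
      obtain ⟨mm, hmm1, hmm2⟩ := top_node hT rt hbc hedge hcov c
      have hpart2 : ∀ s ∈ M, Anc hT rt s m0 → Anc hT rt mm s ∧ mm ≠ s := by
        intro s hsM hsm0
        have hRs : ∀ y ∈ c.support, y ∈ Rt hT rt bag s := by
          obtain ⟨x, hx, hxR⟩ := hcon s hsM (anc_trans hT rt hsm0 hm0t)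
          exact hprop u c s (hstep1 s hsM hsm0) ⟨x, hx, hxR⟩
        exact hmm2 s hRs (hstep1 s hsM hsm0)
      have hmmm0 : Anc hT rt mm m0 := (hpart2 m0 hm0M (anc_refl hT rt m0)).1
      have hmmSF : mm ∈ SF := ⟨u, c, hNN, hmm1⟩
      have hmmM : mm ∈ M := by
        refine hMins mm hmmSF ?_
        intro a ha
        rcases hMtotal a ha m0 hm0M with h | h
        · exact Or.inl (hpart2 a ha h).1
        · exact Or.inl (anc_trans hT rt hmmm0 h)
      exact (hpart2 mm hmmM hmmm0).2 rfl
    -- the greedy construction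
    have greedy : ∀ (j : ℕ) (t : ι), t ∈ M → Anc hT rt t tK →
        (∃ (x : Fin j → V) (c : ∀ i : Fin j, G.Walk (x i) (x i)),
          (∀ i, NNCyc G Λ F (x i) (c i) ∧ ∀ z ∈ (c i).support, z ∈ Rt hT rt bag t) ∧
          (∀ i i' : Fin j, i ≠ i' → ∀ v ∈ (c i).support, v ∉ (c i').support)) ∨
        (∃ t' ∈ M, Anc hT rt t' tK ∧ ∀ (u : V) (c : G.Walk u u), NNCyc G Λ F u c →
          (∀ x ∈ c.support, x ∈ Rt hT rt bag t') → ∃ x ∈ c.support, x ∈ K) := by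
      intro j
      induction j with
      | zero =>
        intro t _ _
        exact Or.inl ⟨Fin.elim0, fun i => i.elim0, fun i => i.elim0, fun i => i.elim0⟩
      | succ j IH =>
        intro t htM htK2
        by_cases hex2 : ∃ u : V, ∃ c : G.Walk u u, NNCyc G Λ F u c ∧
            (∀ x ∈ c.support, x ∈ Rt hT rt bag t) ∧ (∀ x ∈ c.support, x ∉ K)
        · obtain ⟨u1, c1, hNN1, hRt1, hK1⟩ := hex2
          obtain ⟨t', ht'M, ht't, hdisj1⟩ := bclaim u1 c1 hNN1 hK1 t htM
          rcases IH t' ht'M (anc_trans hT rt ht't htK2) with ⟨x, c, hps, hdisj⟩ | hstop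
          · left
            set s : Fin (j+1) → (Σ' (u : V), G.Walk u u) :=
              Fin.cons ⟨u1, c1⟩ (fun i => ⟨x i, c i⟩) with hs
            refine ⟨fun i => (s i).1, fun i => (s i).2, ?_, ?_⟩
            · intro i
              induction i using Fin.cases with
              | zero => exact ⟨hNN1, hRt1⟩
              | succ i' =>
                have h1 := (hps i').1
                have h2 := fun z hz => anc_mono_Rt hT rt ht't ((hps i').2 z hz)
                exact ⟨h1, h2⟩
            · intro i i' hne
              induction i using Fin.cases with
              | zero =>
                induction i' using Fin.cases with
                | zero => exact absurd rfl hne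
                | succ i'' =>
                  intro v hv hv'
                  have : v ∈ Rt hT rt bag t' := (hps i'').2 v hv'
                  exact hdisj1 v hv this
              | succ i'' =>
                induction i' using Fin.cases with
                | zero =>
                  intro v hv hv'
                  have : v ∈ Rt hT rt bag t' := (hps i'').2 v hv
                  exact hdisj1 v hv' this
                | succ i''' =>
                  intro v hv hv'
                  have hne' : i'' ≠ i''' := fun e => hne (congrArg Fin.succ e)
                  exact hdisj i'' i''' hne' v hv
                    hv'
          · exact Or.inr hstop
        · right
          refine ⟨t, htM, htK2, ?_⟩
          intro u c hNN hRtc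
          by_contra hnone
          push_neg at hnone
          exact hex2 ⟨u, c, hNN, hRtc, hnone⟩
    rcases greedy k tK htKM (anc_refl hT rt tK) with ⟨x, c, hps, hdisj⟩ | hstop
    · exact Or.inl ⟨x, c, fun i => (hps i).1, hdisj⟩
    · obtain ⟨t', ht'M, ht'tK, hstop⟩ := hstop
      obtain ⟨us, cs, hNNs, hsupps⟩ := hMSF t' ht'M
      right
      refine ⟨us, cs, hNNs, bag t', (hsize t').1, (hsize t').2, ?_⟩
      intro u c hNN hB xx hxx hxxs
      have hall : ∀ y ∈ c.support, y ∈ Rt hT rt bag t' :=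
        hprop u c t' hB ⟨xx, hxx, hsupps xx hxxs⟩
      obtain ⟨z, hz, hzK⟩ := hstop u c hNN hall
      exact hB z hz (htK t' ht'M ht'tK hzK)

theorem main_ind (hT : T.IsTree) (rt : ι)
    (hcov : ∀ v : V, ∃ b : ι, v ∈ bag b)
    (hedge : ∀ u v : V, G.Adj u v → ∃ b : ι, u ∈ bag b ∧ v ∈ bag b)
    (hbc : ∀ v : V, (T.induce {b : ι | v ∈ bag b}).Connected)
    (hsize : ∀ b : ι, (bag b).Finite ∧ (bag b).ncard ≤ w + 1)
    (k : ℕ) (hk : 1 ≤ k) :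
    ∀ F : Set V,
    (∃ (x : Fin k → V) (c : ∀ i : Fin k, G.Walk (x i) (x i)),
      (∀ i, NNCyc G Λ F (x i) (c i)) ∧
      (∀ i j : Fin k, i ≠ j → ∀ v ∈ (c i).support, v ∉ (c j).support)) ∨
    (∃ X : Set V, X.Finite ∧ X.ncard ≤ (k - 1) * (w + 1) ∧
      ∀ (u : V) (c : G.Walk u u), c.IsCycle →
        (∀ v ∈ c.support, v ∉ F ∪ X) → walkLabel G Λ c = 1) := by
  classical
  induction k, hk using Nat.le_induction with
  | base =>
    intro F
    by_cases hex : ∃ u : V, ∃ c : G.Walk u u, NNCyc G Λ F u c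
    · obtain ⟨u, c, hc⟩ := hex
      left
      refine ⟨fun _ => u, fun _ => c, fun _ => hc, ?_⟩
      intro i j hne
      exact absurd (Subsingleton.elim i j) hne
    · right
      refine ⟨∅, Set.finite_empty, by simp, ?_⟩
      intro u c hcyc havoid
      by_contra hlab
      refine hex ⟨u, c, hcyc, hlab, ?_⟩
      intro x hx hxF
      exact havoid x hx (Or.inl hxF)
  | succ k hk1 IH =>
    intro F
    by_cases hex : ∃ u : V, ∃ c : G.Walk u u, NNCyc G Λ F u c
    · rcases key_lemma hT rt hcov hedge hbc hsize F (k + 1) hex with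
        hleft | ⟨us, cs, hNNs, B, hBfin, hBcard, hBprop⟩
      · exact Or.inl hleft
      · rcases IH (F ∪ B) with ⟨x, c, hps, hdisj⟩ | ⟨X', hX'fin, hX'card, hX'⟩
        · left
          set s : Fin (k+1) → (Σ' (u : V), G.Walk u u) :=
            Fin.cons ⟨us, cs⟩ (fun i => ⟨x i, c i⟩) with hs
          have hweak : ∀ i, NNCyc G Λ F (x i) (c i) ∧ ∀ z ∈ (c i).support, z ∉ B := by
            intro i
            obtain ⟨h1, h2, h3⟩ := hps i
            exact ⟨⟨h1, h2, fun z hz hzF => h3 z hz (Or.inl hzF)⟩,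
              fun z hz hzB => h3 z hz (Or.inr hzB)⟩
          have hdisjs : ∀ i, ∀ v ∈ (c i).support, v ∉ cs.support := by
            intro i v hv hvs
            exact hBprop (x i) (c i) (hweak i).1 (hweak i).2 v hv hvs
          refine ⟨fun i => (s i).1, fun i => (s i).2, ?_, ?_⟩
          · intro i
            induction i using Fin.cases with
            | zero => exact hNNs
            | succ i' => exact (hweak i').1
          · intro i i' hne
            induction i using Fin.cases with
            | zero =>
              induction i' using Fin.cases with
              | zero => exact absurd rfl hne
              | succ i'' =>
                intro v hv hv'
                exact hdisjs i'' v hv' hv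
            | succ i'' =>
              induction i' using Fin.cases with
              | zero =>
                intro v hv hv'
                exact hdisjs i'' v hv hv'
              | succ i''' =>
                intro v hv hv'
                have hne' : i'' ≠ i''' := fun e => hne (congrArg Fin.succ e)
                exact hdisj i'' i''' hne' v hv
                  hv'
        · right
          refine ⟨X' ∪ B, hX'fin.union hBfin, ?_, ?_⟩
          · have h1 := Set.ncard_union_le X' B
            have h2 : (k - 1) * (w + 1) + (w + 1) ≤ (k + 1 - 1) * (w + 1) := by
              obtain ⟨k', rfl⟩ : ∃ k', k = k' + 1 := ⟨k - 1, by omega⟩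
              simp only [Nat.add_sub_cancel]
              ring_nf
              omega
            omega
          · intro u c hcyc havoid
            refine hX' u c hcyc ?_
            intro v hv
            have := havoid v hv
            simp only [Set.mem_union] at this ⊢
            tauto
    · right
      refine ⟨∅, Set.finite_empty, by simp, ?_⟩
      intro u c hcyc havoid
      by_contra hlab
      refine hex ⟨u, c, hcyc, hlab, ?_⟩
      intro x hx hxF
      exact havoid x hx (Or.inl hxF)

end MainLayer

end Stmt9Aux

/-- In a Γ-labeled graph of treewidth at most w, for every k ≥ 1, either there
are k vertex-disjoint non-null cycles or there is a group feedback vertex set of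
size at most (k−1)(w+1). -/
theorem stmt9 {V Γ : Type} [Group Γ] (G : SimpleGraph V) (Λ : V → V → Γ)
    (hskew : ∀ u v : V, Λ v u = (Λ u v)⁻¹)
    (w k : ℕ) (hk : 1 ≤ k) (htw : HasTreewidthLE G w) :
    (∃ (x : Fin k → V) (c : ∀ i : Fin k, G.Walk (x i) (x i)),
      (∀ i, (c i).IsCycle ∧ walkLabel G Λ (c i) ≠ 1) ∧
      (∀ i j : Fin k, i ≠ j → ∀ v ∈ (c i).support, v ∉ (c j).support)) ∨
    (∃ X : Set V, X.Finite ∧ X.ncard ≤ (k - 1) * (w + 1) ∧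
      ∀ (u : V) (c : G.Walk u u), c.IsCycle →
        (∀ v ∈ c.support, v ∉ X) → walkLabel G Λ c = 1) := by
    classical
  obtain ⟨ι, T, bag, hconn, hacyc, hcov, hedge, hbc, hsize⟩ := htw
  have hT : T.IsTree := ⟨hconn, hacyc⟩
  haveI : Nonempty ι := hconn.nonempty
  have rt : ι := Classical.arbitrary ι
  rcases Stmt9Aux.main_ind (G := G) (Λ := Λ) (w := w) hT rt hcov hedge hbc hsize k hk ∅ with
    ⟨x, c, hps, hdisj⟩ | ⟨X, hXfin, hXcard, hX⟩
  · exact Or.inl ⟨x, c, fun i => ⟨(hps i).1, (hps i).2.1⟩, hdisj⟩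
  · right
    refine ⟨X, hXfin, hXcard, ?_⟩
    intro u c hcyc havoid
    refine hX u c hcyc ?_
    intro v hv
    simpa using havoid v hv
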